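/- arXiv:2106.07743 — 3 statements merged into one kernel-verified Lean document; each statement's English description precedes it below -/
import Mathlib

section
/- Let A : X → X* be a bounded linear operator admitting two factorizations A = Q*Q and A = S*TS, where S : X → V, T : V → V and Q : X → H are bounded linear operators. If T is coercive on Range(S), then Range(Q*) = Range(S*). -/
open Complex InnerProductSpace Filter Topology ENNReal TopologicalSpace

noncomputable section

local notation "⟪" x ", " y "⟫" => @inner ℂ _ _ x y

/-- `X*`: the continuous dual of a complex Hilbert space `X`, modeled as the space of
continuous conjugate-linear functionals, so that the dual pairing
`⟨x, ℓ⟩_{X×X*} := conj (ℓ x)` is sesquilinear (linear in `x`, conjugate-linear in `ℓ`). -/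
abbrev ADual (X : Type*) [NormedAddCommGroup X] [InnerProductSpace ℂ X] := X →L⋆[ℂ] ℂ

section defs
variable {X : Type*} [NormedAddCommGroup X] [InnerProductSpace ℂ X]

/-- The sesquilinear dual pairing `⟨x, ℓ⟩_{X×X*}`. -/
def dpair (x : X) (ℓ : ADual X) : ℂ := starRingEnd ℂ (ℓ x)

variable [CompleteSpace X]

/-- `J : X* → X`, the Riesz isometry, determined by `(x, Jℓ)_X = ⟨x, ℓ⟩_{X×X*}`
(with the paper's inner product, linear in the first slot; in Mathlib's convention
this reads `⟪Jℓ, x⟫ = conj (ℓ x)` for all `x`). -/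
def rieszJ (ℓ : ADual X) : X :=
  (InnerProductSpace.toDual ℂ X).symm
    { toFun := fun x => starRingEnd ℂ (ℓ x)
      map_add' := fun x y => by simp
      map_smul' := fun c x => by simp [mul_comm]
      cont := continuous_star.comp ℓ.continuous }

/-- A bounded operator `A : X → X*` is positive if `⟨x, Ax⟩_{X×X*} > 0`
(i.e. it is a positive real number) for every `x ≠ 0`. -/
def IsPositiveOp (A : X →L[ℂ] ADual X) : Prop :=
  ∀ x : X, x ≠ 0 → 0 < (dpair x (A x)).re ∧ (dpair x (A x)).im = 0

/-- Spectral data `{λ_n; x_n; ℓ_n}` of a positive compact operator `A : X → X*`: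
a nonincreasing sequence `λ_n > 0` tending to `0`, an orthonormal basis `x_n` of `X`
of eigenvectors of `JA` with `(JA)x_n = λ_n x_n`, and the dual basis `ℓ_n = J⁻¹x_n`. -/
structure SpectralData (A : X →L[ℂ] ADual X) (lam : ℕ → ℝ) (e : ℕ → X)
    (l : ℕ → ADual X) : Prop where
  pos : ∀ n, 0 < lam n
  anti : Antitone lam
  tendsto_zero : Tendsto lam atTop (𝓝 0)
  orthonormal : Orthonormal ℂ e
  complete : (Submodule.span ℂ (Set.range e)).topologicalClosure = ⊤
  eig : ∀ n, rieszJ (A (e n)) = (lam n : ℂ) • e n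
  dual_basis : ∀ n, rieszJ (l n) = e n

/-- A family of filter functions `f_α : (0, λ₁] → [0, ∞)`, `α > 0`, with
`f_α(t) → 1` as `α → 0` for every `t ∈ (0, λ₁]` and `f_α(t) ≤ C_reg`. -/
def IsFilterFamily (lam : ℕ → ℝ) (Creg : ℝ) (f : ℝ → ℝ → ℝ) : Prop :=
  0 < Creg ∧
    (∀ t ∈ Set.Ioc (0 : ℝ) (lam 0), Tendsto (fun α => f α t) (𝓝[>] (0 : ℝ)) (𝓝 1)) ∧
    (∀ α > (0 : ℝ), ∀ t ∈ Set.Ioc (0 : ℝ) (lam 0), 0 ≤ f α t ∧ f α t ≤ Creg)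

/-- `x_α`, the regularized solution of `Ax = ℓ` for the filter family `f`:
`x_α = Σ_n (f_α(λ_n)/λ_n) conj(⟨x_n, ℓ⟩) x_n`. -/
def IsRegSolution (lam : ℕ → ℝ) (e : ℕ → X) (f : ℝ → ℝ → ℝ) (ℓ : ADual X)
    (xa : ℝ → X) : Prop :=
  ∀ α : ℝ, 0 < α →
    HasSum
      (fun n => (((f α (lam n) / lam n : ℝ) : ℂ) * starRingEnd ℂ (dpair (e n) ℓ)) • e n)
      (xa α)

end defs

section adj
variable {X V : Type*} [NormedAddCommGroup X] [InnerProductSpace ℂ X] [CompleteSpace X]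
  [NormedAddCommGroup V] [InnerProductSpace ℂ V] [CompleteSpace V]

/-- The adjoint `S* : V → X*` of a bounded operator `S : X → V`, determined by
`(Sx, v)_V = ⟨x, S*v⟩_{X×X*}` for all `x ∈ X`, `v ∈ V`. -/
def hadj (S : X →L[ℂ] V) : V →L[ℂ] ADual X :=
  LinearMap.mkContinuous
    { toFun := fun v =>
        { toFun := fun x => ⟪S x, v⟫
          map_add' := fun x y => by simp [inner_add_left]
          map_smul' := fun c x => by simp [inner_smul_left, mul_comm]
          cont := (S.continuous.inner continuous_const) }
      map_add' := fun v w => by ext x; simp [inner_add_right]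
      map_smul' := fun c v => by ext x; simp [inner_smul_right] }
    ‖S‖
    (fun v => by
      apply ContinuousLinearMap.opNorm_le_bound
      · positivity
      · intro x
        calc ‖⟪S x, v⟫‖ ≤ ‖S x‖ * ‖v‖ := norm_inner_le_norm _ _
          _ ≤ (‖S‖ * ‖x‖) * ‖v‖ := by gcongr; exact S.le_opNorm x
          _ = ‖S‖ * ‖v‖ * ‖x‖ := by ring)

/-- A bounded operator `T : V → V` is coercive on the range of `S : X → V` if there is
`β > 0` with `β‖Sx‖² ≤ (Sx, TSx)_V` for all `x ∈ X`. -/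
def CoerciveOnRange (S : X →L[ℂ] V) (T : V →L[ℂ] V) : Prop :=
  ∃ β : ℝ, 0 < β ∧ ∀ x : X, β * ‖S x‖ ^ 2 ≤ (⟪T (S x), S x⟫).re

end adj

section aux
variable {X V H : Type*} [NormedAddCommGroup X] [InnerProductSpace ℂ X] [CompleteSpace X]
  [NormedAddCommGroup V] [InnerProductSpace ℂ V] [CompleteSpace V]
  [NormedAddCommGroup H] [InnerProductSpace ℂ H] [CompleteSpace H]

lemma hadj_apply (S : X →L[ℂ] V) (v : V) (x : X) : hadj S v x = ⟪S x, v⟫ := rfl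

lemma range_hadj_subset (S : X →L[ℂ] V) (Q : X →L[ℂ] H) (C : ℝ)
    (hC : ∀ x, ‖S x‖ ≤ C * ‖Q x‖) :
    Set.range ⇑(hadj S) ⊆ Set.range ⇑(hadj Q) := by
  classical
  have hker : ∀ x : X, Q x = 0 → S x = 0 := by
    intro x hx
    have := hC x
    rw [hx, norm_zero, mul_zero] at this
    exact norm_le_zero_iff.mp this
  have hkey : ∀ x y : X, Q x = Q y → S x = S y := by
    intro x y h
    have : Q (x - y) = 0 := by rw [map_sub, h, sub_self]
    have := hker _ this
    rw [map_sub, sub_eq_zero] at this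
    exact this
  intro ℓ hℓ
  obtain ⟨v, rfl⟩ := hℓ
  set p : Submodule ℂ H := LinearMap.range (Q : X →ₗ[ℂ] H) with hp
  have hmem : ∀ x : X, Q x ∈ p := fun x => LinearMap.mem_range_self _ x
  choose ch hch using fun y : p => LinearMap.mem_range.mp y.2
  simp only [ContinuousLinearMap.coe_coe] at hch
  -- hch : ∀ y : p, Q (ch y) = ↑y
  have key : ∀ (y : p) (x : X), Q x = (y : H) → S (ch y) = S x := by
    intro y x h
    exact hkey _ _ (by rw [hch, h])
  let sl : p →ₗ[ℂ] V :=
    { toFun := fun y => S (ch y)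
      map_add' := by
        intro y z
        have h1 : Q (ch y + ch z) = ((y + z : p) : H) := by
          rw [map_add, hch, hch]; rfl
        show S (ch (y + z)) = S (ch y) + S (ch z)
        rw [key (y + z) _ h1, map_add]
      map_smul' := by
        intro c y
        have h1 : Q (c • ch y) = ((c • y : p) : H) := by
          rw [map_smul, hch]; rfl
        show S (ch (c • y)) = c • S (ch y)
        rw [key (c • y) _ h1, map_smul] }
  have hbound : ∀ y : p, ‖sl y‖ ≤ C * ‖y‖ := by
    intro y
    have : ‖S (ch y)‖ ≤ C * ‖Q (ch y)‖ := hC _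
    rwa [hch] at this
  let Sl : p →L[ℂ] V := LinearMap.mkContinuous sl C hbound
  set M := p.topologicalClosure with hM
  let inclₗ : p →ₗ[ℂ] M := Submodule.inclusion p.le_topologicalClosure
  have hisom : Isometry inclₗ := Isometry.of_dist_eq fun a b => rfl
  let incl : p →L[ℂ] M := ⟨inclₗ, hisom.continuous⟩
  have hdense : DenseRange incl := by
    intro m
    rw [closure_subtype]
    have hmcl : (m : H) ∈ closure (p : Set H) := by
      have := m.2
      rwa [← Submodule.topologicalClosure_coe]
    refine closure_mono ?_ hmcl
    rintro z hz
    exact ⟨incl ⟨z, hz⟩, ⟨⟨z, hz⟩, rfl⟩, rfl⟩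
  have hui : IsUniformInducing incl := hisom.isUniformInducing
  let L : M →L[ℂ] V := Sl.extend incl
  have hL : ∀ x : X, L (incl ⟨Q x, hmem x⟩) = S x := by
    intro x
    rw [ContinuousLinearMap.extend_eq _ hdense hui]
    exact key ⟨Q x, hmem x⟩ x rfl
  refine ⟨((ContinuousLinearMap.adjoint L v : M) : H), ?_⟩
  ext x
  show ⟪Q x, ((ContinuousLinearMap.adjoint L v : M) : H)⟫ = ⟪S x, v⟫
  have h1 : ⟪(incl ⟨Q x, hmem x⟩ : M), ContinuousLinearMap.adjoint L v⟫ =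
      ⟪Q x, ((ContinuousLinearMap.adjoint L v : M) : H)⟫ :=
    Submodule.coe_inner M _ _
  rw [← h1, ContinuousLinearMap.adjoint_inner_right, hL]

lemma norm_le_of_sq_le {a b K : ℝ} (ha : 0 ≤ a) (hb : 0 ≤ b) (h : a ^ 2 ≤ K * b ^ 2) :
    a ≤ Real.sqrt K * b := by
  have := Real.sqrt_le_sqrt h
  rwa [Real.sqrt_sq ha, Real.sqrt_mul' _ (sq_nonneg b), Real.sqrt_sq hb] at this

end aux

/-- If `A = Q*Q = S*TS` with `T` coercive on `Range(S)`, then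
`Range(Q*) = Range(S*)`. -/
theorem range_adjQ_eq_range_adjS
    {X V H : Type*}
    [NormedAddCommGroup X] [InnerProductSpace ℂ X] [CompleteSpace X]
    [NormedAddCommGroup V] [InnerProductSpace ℂ V] [CompleteSpace V]
    [NormedAddCommGroup H] [InnerProductSpace ℂ H] [CompleteSpace H]
    (A : X →L[ℂ] ADual X) (S : X →L[ℂ] V) (T : V →L[ℂ] V) (Q : X →L[ℂ] H)
    (hAQ : A = (hadj Q).comp Q)
    (hAS : A = (hadj S).comp (T.comp S))
    (hT : CoerciveOnRange S T) :
    Set.range ⇑(hadj Q) = Set.range ⇑(hadj S) := by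
  obtain ⟨β, hβ, hco⟩ := hT
  have heq : ∀ x : X, (⟪Q x, Q x⟫).re = (⟪S x, T (S x)⟫).re := by
    intro x
    have h1 : (hadj Q) (Q x) = (hadj S) (T (S x)) := by
      have := hAQ.symm.trans hAS
      exact congrFun (congrArg (fun (B : X →L[ℂ] ADual X) => ⇑B) this) x
    have h2 : ((hadj Q) (Q x)) x = ((hadj S) (T (S x))) x := by rw [h1]
    rw [hadj_apply, hadj_apply] at h2
    rw [h2]
  have hQ2 : ∀ x : X, ‖Q x‖ ^ 2 = (⟪S x, T (S x)⟫).re := by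
    intro x
    rw [← heq x]
    have := inner_self_eq_norm_sq (𝕜 := ℂ) (Q x)
    simpa using this.symm
  -- ‖S x‖ ≤ √(1/β) ‖Q x‖
  have hSQ : ∀ x : X, ‖S x‖ ≤ Real.sqrt (1 / β) * ‖Q x‖ := by
    intro x
    refine norm_le_of_sq_le (norm_nonneg _) (norm_nonneg _) ?_
    have h1 : β * ‖S x‖ ^ 2 ≤ ‖Q x‖ ^ 2 := by
      rw [hQ2 x, ← inner_conj_symm (𝕜 := ℂ) (S x) (T (S x)), Complex.conj_re]
      exact hco x
    rw [one_div]
    calc ‖S x‖ ^ 2 = β⁻¹ * (β * ‖S x‖ ^ 2) := by field_simp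
      _ ≤ β⁻¹ * ‖Q x‖ ^ 2 := by
          exact mul_le_mul_of_nonneg_left h1 (inv_nonneg.mpr hβ.le)
  -- ‖Q x‖ ≤ √‖T‖ ‖S x‖
  have hQS : ∀ x : X, ‖Q x‖ ≤ Real.sqrt ‖T‖ * ‖S x‖ := by
    intro x
    refine norm_le_of_sq_le (norm_nonneg _) (norm_nonneg _) ?_
    rw [hQ2 x]
    calc (⟪S x, T (S x)⟫).re ≤ ‖(⟪S x, T (S x)⟫ : ℂ)‖ := by
          simpa using RCLike.re_le_norm (⟪S x, T (S x)⟫ : ℂ)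
      _ ≤ ‖S x‖ * ‖T (S x)‖ := norm_inner_le_norm _ _
      _ ≤ ‖S x‖ * (‖T‖ * ‖S x‖) := by
          exact mul_le_mul_of_nonneg_left (T.le_opNorm _) (norm_nonneg _)
      _ = ‖T‖ * ‖S x‖ ^ 2 := by ring
  apply Set.Subset.antisymm
  · exact range_hadj_subset Q S (Real.sqrt ‖T‖) hQS
  · exact range_hadj_subset S Q (Real.sqrt (1 / β)) hSQ
end
end

section
/- Let X and V be complex Hilbert spaces with X separable, and let A : X → X* be a positive linear operator with the factorization A = S*TS, where S : X → V is a compact injective bounded linear operator and T : V → V is a bounded linear operator coercive on Range(S). Then for ℓ ∈ X*, ℓ ∈ Range(S*) if and only if Σ_n (1/λ_n) |⟨x_n, ℓ⟩_{X×X*}|² < ∞, where {λ_n; x_n; ℓ_n} is the spectral data of the (positive compact) operator A. -/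
open Complex InnerProductSpace Filter Topology ENNReal TopologicalSpace

noncomputable section

local notation "⟪" x ", " y "⟫" => @inner ℂ _ _ x y

set_option maxHeartbeats 1600000


section helper
variable {X : Type*} [NormedAddCommGroup X] [InnerProductSpace ℂ X] [CompleteSpace X]

lemma rieszJ_inner (ℓ : ADual X) (x : X) : ⟪rieszJ ℓ, x⟫ = starRingEnd ℂ (ℓ x) :=
  InnerProductSpace.toDual_symm_apply

lemma adual_apply_eq (ℓ : ADual X) (x : X) :
    ℓ x = starRingEnd ℂ ⟪rieszJ ℓ, x⟫ := by
  rw [rieszJ_inner]; simp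

end helper

/-- If a positive `A = S*TS` with `S` compact and injective and `T`
coercive on `Range(S)`, then `ℓ ∈ Range(S*)` iff
`Σ_n (1/λ_n)|⟨x_n, ℓ⟩|² < ∞`, where `{λ_n; x_n; ℓ_n}` is the spectral data of `A`. -/

theorem range_Sstar_picard
    {X V : Type*}
    [NormedAddCommGroup X] [InnerProductSpace ℂ X] [CompleteSpace X] [SeparableSpace X]
    [NormedAddCommGroup V] [InnerProductSpace ℂ V] [CompleteSpace V]
    (A : X →L[ℂ] ADual X) (hpos : IsPositiveOp A)
    (S : X →L[ℂ] V) (T : V →L[ℂ] V)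
    (hAS : A = (hadj S).comp (T.comp S))
    (hScpt : IsCompactOperator ⇑S) (hSinj : Function.Injective ⇑S)
    (hT : CoerciveOnRange S T)
    (lam : ℕ → ℝ) (e : ℕ → X) (l : ℕ → ADual X)
    (hspec : SpectralData A lam e l) :
    ∀ ℓ : ADual X,
      ℓ ∈ Set.range ⇑(hadj S) ↔
        Summable (fun n => (1 / lam n) * ‖dpair (e n) ℓ‖ ^ 2) := by
  classical
  have cconj : ∀ z : ℂ, starRingEnd ℂ z * z = ((‖z‖ ^ 2 : ℝ) : ℂ) := fun z => by
    rw [mul_comm, Complex.mul_conj, Complex.normSq_eq_norm_sq]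
  obtain ⟨β, hβ, hcoer⟩ := hT
  have hlampos := hspec.pos
  have hlamne : ∀ n, (lam n : ℂ) ≠ 0 := fun n => by
    exact_mod_cast Complex.ofReal_ne_zero.mpr (ne_of_gt (hlampos n))
  have hadj_apply : ∀ (v : V) (x : X), (hadj S) v x = ⟪S x, v⟫ := fun v x => rfl
  have hone : ∀ n m : ℕ, ⟪e n, e m⟫ = if n = m then (1:ℂ) else 0 :=
    fun n m => orthonormal_iff_ite.mp hspec.orthonormal n m
  have hAen : ∀ (n : ℕ) (x : X), (A (e n)) x = (lam n : ℂ) * starRingEnd ℂ ⟪e n, x⟫ := by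
    intro n x
    rw [adual_apply_eq, hspec.eig n, inner_smul_left]
    simp
  have hAapp : ∀ x y : X, (A x) y = ⟪S y, T (S x)⟫ := by
    intro x y; rw [hAS]; rfl
  -- key quadratic inequality on finite sums
  have keyQ : ∀ (c : ℕ → ℂ) (t : Finset ℕ),
      β * ‖S (∑ n ∈ t, c n • e n)‖ ^ 2 ≤ ∑ n ∈ t, lam n * ‖c n‖ ^ 2 := by
    intro c t
    set x : X := ∑ n ∈ t, c n • e n with hx
    have hinner : ∀ n ∈ t, ⟪e n, x⟫ = c n := by
      intro n hn
      rw [hx, inner_sum]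
      simp only [inner_smul_right, hone]
      simp [Finset.sum_ite_eq' t n (fun m => c m), hn]
    have hAxx : (A x) x = ((∑ n ∈ t, lam n * ‖c n‖ ^ 2 : ℝ) : ℂ) := by
      have hA1 : A x = ∑ n ∈ t, c n • A (e n) := by
        rw [hx, map_sum]; exact Finset.sum_congr rfl fun n _ => by rw [map_smul]
      rw [hA1, ContinuousLinearMap.sum_apply]
      push_cast
      refine Finset.sum_congr rfl fun n hn => ?_
      simp only [Pi.smul_apply, smul_eq_mul]
      rw [hAen, hinner n hn,
        show c n * ((lam n : ℂ) * starRingEnd ℂ (c n))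
          = (lam n : ℂ) * (starRingEnd ℂ (c n) * c n) from by ring,
        cconj]
      push_cast
      ring
    have h1 := hcoer x
    have h2 : (⟪T (S x), S x⟫).re = ∑ n ∈ t, lam n * ‖c n‖ ^ 2 := by
      rw [← inner_conj_symm (T (S x)) (S x), Complex.conj_re, ← hAapp x x, hAxx,
        Complex.ofReal_re]
    linarith
  -- norm identity for the coefficients
  have hgc : ∀ (ℓ' : ADual X) (n : ℕ), (1 / lam n) * ‖dpair (e n) ℓ'‖ ^ 2
      = lam n * ‖ℓ' (e n) / (lam n : ℂ)‖ ^ 2 := by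
    intro ℓ' n
    have h1 : ‖dpair (e n) ℓ'‖ = ‖ℓ' (e n)‖ := by
      simp [dpair]
    have h2 : ‖ℓ' (e n) / (lam n : ℂ)‖ = ‖ℓ' (e n)‖ / lam n := by
      rw [norm_div, Complex.norm_real, Real.norm_eq_abs, abs_of_pos (hlampos n)]
    have h3 := (hlampos n).ne'
    rw [h1, h2, div_pow]
    field_simp
  intro ℓ
  constructor
  · -- forward: ℓ = S* v ⇒ summable
    rintro ⟨v, rfl⟩
    have hg0 : ∀ n, (0:ℝ) ≤ (1 / lam n) * ‖dpair (e n) ((hadj S) v)‖ ^ 2 := by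
      intro n
      have := (hlampos n).le
      positivity
    refine summable_of_sum_le (c := ‖v‖ ^ 2 / β) hg0 ?_
    intro t
    set c : ℕ → ℂ := fun n => ((hadj S) v) (e n) / (lam n : ℂ) with hc
    set x : X := ∑ n ∈ t, c n • e n with hx
    set P : ℝ := ∑ n ∈ t, (1 / lam n) * ‖dpair (e n) ((hadj S) v)‖ ^ 2 with hP
    have hP0 : 0 ≤ P := Finset.sum_nonneg fun n _ => hg0 n
    have hPc : P = ∑ n ∈ t, lam n * ‖c n‖ ^ 2 :=
      Finset.sum_congr rfl fun n _ => hgc ((hadj S) v) n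
    have hℓx : ((hadj S) v) x = ((P : ℝ) : ℂ) := by
      rw [hx, map_sum, hP]
      push_cast
      refine Finset.sum_congr rfl fun n hn => ?_
      have h1 : ((hadj S) v) (c n • e n) = starRingEnd ℂ (c n) * ((hadj S) v) (e n) := by
        rw [ContinuousLinearMap.map_smulₛₗ]; rfl
      have h2 : starRingEnd ℂ (c n)
          = starRingEnd ℂ (((hadj S) v) (e n)) / (lam n : ℂ) := by
        simp only [hc, map_div₀, Complex.conj_ofReal]
      rw [h1, h2, div_mul_eq_mul_div, cconj]
      simp only [dpair, RCLike.norm_conj]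
      push_cast
      ring
    have hub : P ≤ ‖S x‖ * ‖v‖ := by
      have hb : ‖((hadj S) v) x‖ ≤ ‖S x‖ * ‖v‖ := by
        rw [hadj_apply]; exact norm_inner_le_norm _ _
      rw [hℓx, Complex.norm_real, Real.norm_eq_abs, _root_.abs_of_nonneg hP0] at hb
      exact hb
    have hlb : β * ‖S x‖ ^ 2 ≤ P := by
      rw [hPc]; exact keyQ c t
    rcases eq_or_lt_of_le hP0 with h0 | h0
    · rw [← h0]; positivity
    · rw [le_div_iff₀ hβ]
      have h1 : β * (P * P) ≤ P * ‖v‖ ^ 2 := by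
        have hsv : 0 ≤ ‖S x‖ * ‖v‖ := mul_nonneg (norm_nonneg _) (norm_nonneg _)
        have ha := mul_le_mul hub hub hP0 hsv
        nlinarith [sq_nonneg ‖v‖]
      nlinarith [h1, h0]
  · -- backward: summable ⇒ ℓ ∈ range S*
    intro hsum
    set c : ℕ → ℂ := fun n => ℓ (e n) / (lam n : ℂ) with hc
    -- summability of the series defining w
    have hsum2 : Summable (fun n => c n • S (e n)) := by
      rw [summable_iff_vanishing_norm]
      intro ε hε
      obtain ⟨s, hs⟩ := summable_iff_vanishing_norm.mp hsum (β * ε ^ 2) (by positivity)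
      refine ⟨s, fun t ht => ?_⟩
      have h1 : ∑ n ∈ t, c n • S (e n) = S (∑ n ∈ t, c n • e n) := by
        rw [map_sum]
        exact Finset.sum_congr rfl fun n _ => by rw [map_smul]
      have h2 := keyQ c t
      have h3 := hs t ht
      have h40 : ∀ n ∈ t, (0:ℝ) ≤ (1 / lam n) * ‖dpair (e n) ℓ‖ ^ 2 := by
        intro n _
        have := (hlampos n).le
        positivity
      have h4 : ∑ n ∈ t, (1 / lam n) * ‖dpair (e n) ℓ‖ ^ 2 < β * ε ^ 2 := by
        calc ∑ n ∈ t, (1 / lam n) * ‖dpair (e n) ℓ‖ ^ 2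
            ≤ ‖∑ n ∈ t, (1 / lam n) * ‖dpair (e n) ℓ‖ ^ 2‖ := le_abs_self _
          _ < β * ε ^ 2 := h3
      have h5 : ∑ n ∈ t, lam n * ‖c n‖ ^ 2 < β * ε ^ 2 := by
        rw [show ∑ n ∈ t, lam n * ‖c n‖ ^ 2
            = ∑ n ∈ t, (1 / lam n) * ‖dpair (e n) ℓ‖ ^ 2 from
          Finset.sum_congr rfl fun n _ => (hgc ℓ n).symm]
        exact h4
      rw [h1]
      have h6 : ‖S (∑ n ∈ t, c n • e n)‖ ^ 2 < ε ^ 2 := by nlinarith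
      exact lt_of_pow_lt_pow_left₀ 2 hε.le h6
    obtain ⟨w, hw⟩ := hsum2
    refine ⟨T w, ?_⟩
    -- pointwise agreement on the basis
    have heq : ∀ m, (hadj S) (T w) (e m) = ℓ (e m) := by
      intro m
      have hTw : HasSum (fun n => T (c n • S (e n))) (T w) := hw.mapL T
      have h2 : HasSum (fun n => ⟪S (e m), T (c n • S (e n))⟫) ⟪S (e m), T w⟫ :=
        hTw.mapL (innerSL ℂ (S (e m)))
      have h3 : (fun n => ⟪S (e m), T (c n • S (e n))⟫)
          = fun n => if n = m then ℓ (e m) else 0 := by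
        funext n
        rw [map_smul, inner_smul_right, ← hAapp (e n) (e m), hAen, hone]
        by_cases h : n = m
        · subst h
          simp only [if_pos rfl, if_true, map_one, mul_one, hc]
          exact div_mul_cancel₀ _ (hlamne n)
        · simp [h]
      rw [h3] at h2
      rw [hadj_apply]
      exact h2.unique (hasSum_ite_eq m (ℓ (e m)))
    -- conclude equality of functionals via density
    set z : X := rieszJ ((hadj S) (T w)) - rieszJ ℓ with hz
    have hz_e : ∀ m, ⟪z, e m⟫ = 0 := by
      intro m
      rw [hz, inner_sub_left, rieszJ_inner, rieszJ_inner, heq m, sub_self]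
    have hz_mem : z ∈ (Submodule.span ℂ (Set.range e))ᗮ := by
      rw [Submodule.mem_orthogonal]
      intro u hu
      induction hu using Submodule.span_induction with
      | mem u hu =>
          obtain ⟨m, rfl⟩ := hu
          rw [← inner_conj_symm, hz_e m, map_zero]
      | zero => exact inner_zero_left z
      | add u v' _ _ hu hv => rw [inner_add_left, hu, hv, add_zero]
      | smul a u _ hu => rw [inner_smul_left, hu, mul_zero]
    have hbot : (Submodule.span ℂ (Set.range e))ᗮ = ⊥ :=
      Submodule.topologicalClosure_eq_top_iff.mp hspec.complete
    have hz0 : z = 0 := by rw [hbot] at hz_mem; exact hz_mem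
    have hJ : rieszJ ((hadj S) (T w)) = rieszJ ℓ := by
      rw [← sub_eq_zero]; exact hz0
    ext x
    rw [adual_apply_eq, adual_apply_eq, hJ]
end
end

section
/- Let X be a separable complex Hilbert space, A : X → X* a positive compact linear operator with spectral data {λ_n; x_n; ℓ_n}, {f_α}_{α>0} a family of filter functions with bound C_reg, ℓ ∈ X*, and x_α the regularized solution of Ax = ℓ. Then, as values in [0, ∞], Σ_n (1/λ_n) |⟨x_n, ℓ⟩_{X×X*}|² ≤ liminf_{α→0} ⟨x_α, Ax_α⟩_{X×X*} ≤ C_reg² Σ_n (1/λ_n) |⟨x_n, ℓ⟩_{X×X*}|². -/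
open Complex InnerProductSpace Filter Topology ENNReal TopologicalSpace

noncomputable section

local notation "⟪" x ", " y "⟫" => @inner ℂ _ _ x y

section aux
variable {X : Type*} [NormedAddCommGroup X] [InnerProductSpace ℂ X] [CompleteSpace X]

/-- Evaluation at a point, as a continuous ℂ-linear map on `ADual X`. -/
def evalAt (y : X) : ADual X →L[ℂ] ℂ :=
  LinearMap.mkContinuous
    { toFun := fun g => g y
      map_add' := fun g h => rfl
      map_smul' := fun c g => rfl }
    ‖y‖ (fun g => by rw [mul_comm]; exact g.le_opNorm y)

@[simp] lemma evalAt_apply (y : X) (g : ADual X) : evalAt y g = g y := rfl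

lemma inner_rieszJ (ℓ' : ADual X) (y : X) : ⟪rieszJ ℓ', y⟫ = starRingEnd ℂ (ℓ' y) := by
  simp [rieszJ, InnerProductSpace.toDual_symm_apply]

end aux

/-- For a filter family with bound `C_reg` and the regularized solution
`x_α` of `Ax = ℓ`, as values in `[0, ∞]`:
`Σ_n (1/λ_n)|⟨x_n, ℓ⟩|² ≤ liminf_{α→0} ⟨x_α, Ax_α⟩ ≤ C_reg² Σ_n (1/λ_n)|⟨x_n, ℓ⟩|²`. -/
theorem liminf_bounds_regularized
    {X : Type*} [NormedAddCommGroup X] [InnerProductSpace ℂ X] [CompleteSpace X]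
    [SeparableSpace X]
    (A : X →L[ℂ] ADual X) (hpos : IsPositiveOp A) (hcpt : IsCompactOperator ⇑A)
    (lam : ℕ → ℝ) (e : ℕ → X) (l : ℕ → ADual X)
    (hspec : SpectralData A lam e l)
    (Creg : ℝ) (f : ℝ → ℝ → ℝ) (hf : IsFilterFamily lam Creg f)
    (ℓ : ADual X) (xa : ℝ → X) (hxa : IsRegSolution lam e f ℓ xa) :
    (∑' n, ENNReal.ofReal ((1 / lam n) * ‖dpair (e n) ℓ‖ ^ 2)) ≤
        Filter.liminf (fun α => ENNReal.ofReal ((dpair (xa α) (A (xa α))).re))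
          (𝓝[>] (0 : ℝ)) ∧
      Filter.liminf (fun α => ENNReal.ofReal ((dpair (xa α) (A (xa α))).re))
          (𝓝[>] (0 : ℝ)) ≤
        ENNReal.ofReal (Creg ^ 2) *
          ∑' n, ENNReal.ofReal ((1 / lam n) * ‖dpair (e n) ℓ‖ ^ 2) := by
  obtain ⟨hC, hlim, hbd⟩ := hf
  set d : ℕ → ℂ := fun n => dpair (e n) ℓ with hd
  have hmem : ∀ n, lam n ∈ Set.Ioc (0 : ℝ) (lam 0) :=
    fun n => ⟨hspec.pos n, hspec.anti (Nat.zero_le n)⟩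
  have hAe : ∀ n (y : X), A (e n) y = (lam n : ℂ) * ⟪y, e n⟫ := by
    intro n y
    have h1 : ⟪rieszJ (A (e n)), y⟫ = starRingEnd ℂ (A (e n) y) := inner_rieszJ _ _
    rw [hspec.eig n] at h1
    have h2 : ((lam n : ℂ)) * ⟪e n, y⟫ = starRingEnd ℂ (A (e n) y) := by
      rw [← h1, inner_smul_left]
      simp
    calc A (e n) y = starRingEnd ℂ (starRingEnd ℂ (A (e n) y)) := by simp
      _ = starRingEnd ℂ ((lam n : ℂ) * ⟪e n, y⟫) := by rw [h2]
      _ = (lam n : ℂ) * ⟪y, e n⟫ := by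
          rw [map_mul, inner_conj_symm]; simp
  -- key computation of the quadratic form
  have key : ∀ α, 0 < α → HasSum
      (fun n => (f α (lam n)) ^ 2 * ((1 / lam n) * ‖d n‖ ^ 2))
      ((dpair (xa α) (A (xa α))).re) := by
    intro α hα
    set c : ℕ → ℂ := fun n => ((f α (lam n) / lam n : ℝ) : ℂ) * starRingEnd ℂ (d n) with hc
    have hs : HasSum (fun n => c n • e n) (xa α) := hxa α hα
    have hcoef : ∀ n, ⟪e n, xa α⟫ = c n := by
      intro n
      have h3 := (innerSL ℂ (e n)).hasSum hs
      have h4 : (fun m => innerSL ℂ (e n) (c m • e m)) =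
          fun m => if m = n then c n else 0 := by
        funext m
        have h5 := orthonormal_iff_ite.mp hspec.orthonormal n m
        by_cases h : m = n
        · subst h; simp [inner_smul_right, h5, hspec.orthonormal.1 m]
        · have h6 : ¬ (n = m) := fun hh => h hh.symm
          simp [inner_smul_right, h5, h, h6]
      rw [h4] at h3
      exact h3.unique (hasSum_ite_eq n (c n))
    have hs2 := ((evalAt (xa α)).comp A).hasSum hs
    simp only [ContinuousLinearMap.coe_comp', Function.comp_apply, map_smul,
      evalAt_apply, smul_eq_mul] at hs2
    have hs3 : HasSum (fun n => ((lam n * ‖c n‖ ^ 2 : ℝ) : ℂ)) (A (xa α) (xa α)) := by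
      have heq : (fun n => c n * (A (e n) (xa α))) =
          fun n => ((lam n * ‖c n‖ ^ 2 : ℝ) : ℂ) := by
        funext n
        rw [hAe n (xa α), ← inner_conj_symm, hcoef n]
        have hr : c n * ((lam n : ℂ) * starRingEnd ℂ (c n)) =
            (lam n : ℂ) * (c n * starRingEnd ℂ (c n)) := by ring
        rw [hr, Complex.mul_conj, Complex.normSq_eq_norm_sq]
        push_cast
        ring
      rw [heq] at hs2
      exact hs2
    have hs4 : HasSum (fun n => lam n * ‖c n‖ ^ 2) ((A (xa α) (xa α)).re) := by
      have := Complex.reCLM.hasSum hs3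
      simp only [Complex.reCLM_apply, Complex.ofReal_re] at this
      exact this
    have hre : (dpair (xa α) (A (xa α))).re = (A (xa α) (xa α)).re := by
      simp [dpair]
    have hterm : ∀ n, lam n * ‖c n‖ ^ 2 =
        (f α (lam n)) ^ 2 * ((1 / lam n) * ‖d n‖ ^ 2) := by
      intro n
      have hne : lam n ≠ 0 := (hspec.pos n).ne'
      have hnc : ‖c n‖ ^ 2 = (f α (lam n) / lam n) ^ 2 * ‖d n‖ ^ 2 := by
        rw [hc]
        simp only [norm_mul, Complex.norm_real, RCLike.norm_conj, mul_pow, Real.norm_eq_abs, _root_.sq_abs]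
      rw [hnc]
      field_simp
    rw [hre]
    have heq2 : (fun n => lam n * ‖c n‖ ^ 2) =
        fun n => (f α (lam n)) ^ 2 * ((1 / lam n) * ‖d n‖ ^ 2) := funext hterm
    rw [heq2] at hs4
    exact hs4
  have hgnn : ∀ α n, 0 ≤ (f α (lam n)) ^ 2 * ((1 / lam n) * ‖d n‖ ^ 2) := by
    intro α n
    have := (hspec.pos n).le
    positivity
  set t : ℕ → ℝ≥0∞ := fun n => ENNReal.ofReal ((1 / lam n) * ‖d n‖ ^ 2) with ht
  constructor
  · -- lower bound
    rw [ENNReal.tsum_eq_iSup_sum]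
    refine iSup_le fun s => ?_
    have htend : Tendsto (fun α => ∑ n ∈ s, ENNReal.ofReal
        ((f α (lam n)) ^ 2 * ((1 / lam n) * ‖d n‖ ^ 2))) (𝓝[>] (0 : ℝ))
        (𝓝 (∑ n ∈ s, t n)) := by
      refine tendsto_finset_sum s fun n _ => ?_
      have h1 : Tendsto (fun α => (f α (lam n)) ^ 2 * ((1 / lam n) * ‖d n‖ ^ 2))
          (𝓝[>] (0 : ℝ)) (𝓝 ((1 / lam n) * ‖d n‖ ^ 2)) := by
        have := ((hlim (lam n) (hmem n)).mul (hlim (lam n) (hmem n))).mul_const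
          ((1 / lam n) * ‖d n‖ ^ 2)
        simpa [pow_two] using this
      exact (ENNReal.continuous_ofReal.tendsto _).comp h1
    have hle : ∀ᶠ α in 𝓝[>] (0 : ℝ),
        (∑ n ∈ s, ENNReal.ofReal ((f α (lam n)) ^ 2 * ((1 / lam n) * ‖d n‖ ^ 2))) ≤
          ENNReal.ofReal ((dpair (xa α) (A (xa α))).re) := by
      filter_upwards [self_mem_nhdsWithin] with α hα
      rw [← ENNReal.ofReal_sum_of_nonneg (fun n _ => hgnn α n)]
      exact ENNReal.ofReal_le_ofReal (sum_le_hasSum s (fun n _ => hgnn α n) (key α hα))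
    calc (∑ n ∈ s, t n) = liminf (fun α => ∑ n ∈ s, ENNReal.ofReal
          ((f α (lam n)) ^ 2 * ((1 / lam n) * ‖d n‖ ^ 2))) (𝓝[>] (0 : ℝ)) :=
        htend.liminf_eq.symm
      _ ≤ _ := liminf_le_liminf hle
  · -- upper bound
    have hub : ∀ᶠ α in 𝓝[>] (0 : ℝ),
        ENNReal.ofReal ((dpair (xa α) (A (xa α))).re) ≤
          ENNReal.ofReal (Creg ^ 2) * ∑' n, t n := by
      filter_upwards [self_mem_nhdsWithin] with α hα
      rw [← (key α hα).tsum_eq,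
        ENNReal.ofReal_tsum_of_nonneg (hgnn α) (key α hα).summable]
      calc (∑' n, ENNReal.ofReal ((f α (lam n)) ^ 2 * ((1 / lam n) * ‖d n‖ ^ 2)))
          ≤ ∑' n, ENNReal.ofReal (Creg ^ 2) * t n := by
            refine ENNReal.tsum_le_tsum fun n => ?_
            rw [ht, ← ENNReal.ofReal_mul (by positivity)]
            refine ENNReal.ofReal_le_ofReal ?_
            have hb := hbd α hα (lam n) (hmem n)
            have hnn : 0 ≤ (1 / lam n) * ‖d n‖ ^ 2 := by
              have := (hspec.pos n).le; positivity
            have hsq : (f α (lam n)) ^ 2 ≤ Creg ^ 2 := by nlinarith [hb.1, hb.2]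
            exact mul_le_mul_of_nonneg_right hsq hnn
        _ = ENNReal.ofReal (Creg ^ 2) * ∑' n, t n := ENNReal.tsum_mul_left
    calc liminf (fun α => ENNReal.ofReal ((dpair (xa α) (A (xa α))).re)) (𝓝[>] (0:ℝ))
        ≤ liminf (fun _ => ENNReal.ofReal (Creg ^ 2) * ∑' n, t n) (𝓝[>] (0:ℝ)) :=
          liminf_le_liminf hub
      _ = ENNReal.ofReal (Creg ^ 2) * ∑' n, t n := liminf_const _
end
end
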